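/- (Rank-one intertwining for the quantum Toda chain, n = 2.) Let H^{(2)} = ∂²/∂x_1² + ∂²/∂x_2² - 2e^{x_2 - x_1} acting on smooth functions of (x_1,x_2) ∈ ℝ², and for θ ∈ ℂ define the kernel Q_θ(x,y) = exp(θ(x_1 + x_2 - y) - e^{y - x_1} - e^{x_2 - y}) on ℝ² × ℝ. Then for all x ∈ ℝ² and y ∈ ℝ: (H^{(2)}_x - θ²) Q_θ(x,y) = ∂²/∂y² Q_θ(x,y), where H^{(2)}_x acts in the x variables. -/

import Mathlib

/-- The rank-one quantum Toda intertwining kernel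
`Q_θ(x,y) = exp(θ(x₁+x₂-y) - e^{y-x₁} - e^{x₂-y})`. -/
noncomputable def Qtoda (θ : ℂ) (x1 x2 y : ℝ) : ℂ :=
  Complex.exp (θ * ((x1 : ℂ) + (x2 : ℂ) - (y : ℂ))
    - (Real.exp (y - x1) : ℂ) - (Real.exp (x2 - y) : ℂ))

lemma hcoe (a : ℝ) : HasDerivAt (fun t : ℝ => (t : ℂ)) 1 a := by
  have := (hasDerivAt_id a).ofReal_comp
  simp only [id, Complex.ofReal_one] at this
  exact this

lemma hA (c a : ℝ) : HasDerivAt (fun t : ℝ => Complex.exp ((c : ℂ) - t))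
    (-Complex.exp ((c : ℂ) - a)) a := by
  have := ((hasDerivAt_const a (c : ℂ)).sub (hcoe a)).cexp
  simpa using this

lemma hB (c a : ℝ) : HasDerivAt (fun t : ℝ => Complex.exp ((t : ℂ) - c))
    (Complex.exp ((a : ℂ) - c)) a := by
  have := ((hcoe a).sub (hasDerivAt_const a (c : ℂ))).cexp
  simpa using this

lemma Qtoda_eq (θ : ℂ) (x1 x2 y : ℝ) : Qtoda θ x1 x2 y =
    Complex.exp (θ * ((x1 : ℂ) + x2 - y) - Complex.exp ((y:ℂ) - x1)
      - Complex.exp ((x2:ℂ) - y)) := by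
  unfold Qtoda; push_cast [Complex.ofReal_exp]; ring_nf

lemma hQ1 (θ : ℂ) (x2 y a : ℝ) : HasDerivAt (fun t => Qtoda θ t x2 y)
    ((θ + Complex.exp ((y:ℂ) - a)) * Qtoda θ a x2 y) a := by
  simp only [Qtoda_eq]
  have h : HasDerivAt (fun t : ℝ => θ * ((t : ℂ) + x2 - y) - Complex.exp ((y:ℂ) - t)
      - Complex.exp ((x2:ℂ) - y)) (θ + Complex.exp ((y:ℂ) - a)) a := by
    have h1 := (((hcoe a).add_const (x2:ℂ)).sub_const (y:ℂ)).const_mul θ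
    have := (h1.sub (hA y a)).sub_const (Complex.exp ((x2:ℂ) - y))
    simpa [mul_comm] using this
  simpa [mul_comm] using h.cexp

lemma hQ2 (θ : ℂ) (x1 y a : ℝ) : HasDerivAt (fun t => Qtoda θ x1 t y)
    ((θ - Complex.exp ((a:ℂ) - y)) * Qtoda θ x1 a y) a := by
  simp only [Qtoda_eq]
  have h : HasDerivAt (fun t : ℝ => θ * ((x1 : ℂ) + t - y) - Complex.exp ((y:ℂ) - x1)
      - Complex.exp ((t:ℂ) - y)) (θ - Complex.exp ((a:ℂ) - y)) a := by
    have h1 := (((hcoe a).const_add (x1:ℂ)).sub_const (y:ℂ)).const_mul θ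
    have := (h1.sub_const (Complex.exp ((y:ℂ) - x1))).sub (hB y a)
    exact this.congr_deriv (by ring)
  simpa [mul_comm] using h.cexp

lemma hQ3 (θ : ℂ) (x1 x2 a : ℝ) : HasDerivAt (fun t => Qtoda θ x1 x2 t)
    ((-θ - Complex.exp ((a:ℂ) - x1) + Complex.exp ((x2:ℂ) - a)) * Qtoda θ x1 x2 a) a := by
  simp only [Qtoda_eq]
  have h : HasDerivAt (fun t : ℝ => θ * ((x1 : ℂ) + x2 - t) - Complex.exp ((t:ℂ) - x1)
      - Complex.exp ((x2:ℂ) - t))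
      (-θ - Complex.exp ((a:ℂ) - x1) + Complex.exp ((x2:ℂ) - a)) a := by
    have h1 := ((hcoe a).const_sub ((x1:ℂ) + x2)).const_mul θ
    have := (h1.sub (hB x1 a)).sub (hA x2 a)
    exact this.congr_deriv (by ring)
  simpa [mul_comm] using h.cexp

/-- Rank-one intertwining for the quantum Toda chain (`n = 2`):
`(H^{(2)}_x - θ²) Q_θ(x,y) = ∂²_y Q_θ(x,y)` pointwise, where
`H^{(2)} = ∂²_{x₁} + ∂²_{x₂} - 2e^{x₂-x₁}`. -/
theorem toda_intertwining_rank_one (θ : ℂ) (x1 x2 y : ℝ) :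
    deriv (deriv fun t => Qtoda θ t x2 y) x1
      + deriv (deriv fun t => Qtoda θ x1 t y) x2
      - 2 * (Real.exp (x2 - x1) : ℂ) * Qtoda θ x1 x2 y
      - θ ^ 2 * Qtoda θ x1 x2 y
    = deriv (deriv fun t => Qtoda θ x1 x2 t) y := by
  have d1 : deriv (fun t => Qtoda θ t x2 y) = fun t : ℝ => (θ + Complex.exp ((y:ℂ) - t)) * Qtoda θ t x2 y :=
    funext fun t => (hQ1 θ x2 y t).deriv
  have d2 : deriv (fun t => Qtoda θ x1 t y) = fun t : ℝ => (θ - Complex.exp ((t:ℂ) - y)) * Qtoda θ x1 t y :=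
    funext fun t => (hQ2 θ x1 y t).deriv
  have d3 : deriv (fun t => Qtoda θ x1 x2 t) = fun t : ℝ =>
      (-θ - Complex.exp ((t:ℂ) - x1) + Complex.exp ((x2:ℂ) - t)) * Qtoda θ x1 x2 t :=
    funext fun t => (hQ3 θ x1 x2 t).deriv
  rw [d1, d2, d3]
  have D1 : HasDerivAt (fun t : ℝ => (θ + Complex.exp ((y:ℂ) - t)) * Qtoda θ t x2 y)
      ((-Complex.exp ((y:ℂ) - x1)) * Qtoda θ x1 x2 y
        + (θ + Complex.exp ((y:ℂ) - x1)) * ((θ + Complex.exp ((y:ℂ) - x1)) * Qtoda θ x1 x2 y)) x1 :=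
    (((hasDerivAt_const x1 θ).add (hA y x1)).mul (hQ1 θ x2 y x1)).congr_deriv (by simp only [Pi.add_apply, Pi.sub_apply]; ring)
  have D2 : HasDerivAt (fun t : ℝ => (θ - Complex.exp ((t:ℂ) - y)) * Qtoda θ x1 t y)
      ((-Complex.exp ((x2:ℂ) - y)) * Qtoda θ x1 x2 y
        + (θ - Complex.exp ((x2:ℂ) - y)) * ((θ - Complex.exp ((x2:ℂ) - y)) * Qtoda θ x1 x2 y)) x2 :=
    (((hasDerivAt_const x2 θ).sub (hB y x2)).mul (hQ2 θ x1 y x2)).congr_deriv (by simp only [Pi.add_apply, Pi.sub_apply]; ring)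
  have D3 : HasDerivAt (fun t : ℝ => (-θ - Complex.exp ((t:ℂ) - x1) + Complex.exp ((x2:ℂ) - t)) * Qtoda θ x1 x2 t)
      ((-Complex.exp ((y:ℂ) - x1) - Complex.exp ((x2:ℂ) - y)) * Qtoda θ x1 x2 y
        + (-θ - Complex.exp ((y:ℂ) - x1) + Complex.exp ((x2:ℂ) - y))
            * ((-θ - Complex.exp ((y:ℂ) - x1) + Complex.exp ((x2:ℂ) - y)) * Qtoda θ x1 x2 y)) y :=
    ((((hasDerivAt_const y (-θ)).sub (hB x1 y)).add (hA x2 y)).mul (hQ3 θ x1 x2 y)).congr_deriv (by simp only [Pi.add_apply, Pi.sub_apply]; ring)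
  rw [D1.deriv, D2.deriv, D3.deriv]
  have he : (Real.exp (x2 - x1) : ℂ) = Complex.exp ((y:ℂ) - x1) * Complex.exp ((x2:ℂ) - y) := by
    rw [← Complex.exp_add, Complex.ofReal_exp]; push_cast; ring_nf
  rw [he]; ring
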